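/- Let w ∈ ℂ with Im(w) ≠ 0, let u_w(x) = x - w and u(x) = x - i. Then for every n ∈ ℕ, the n-th derivative of the function x ↦ u_w(x)^{-1} u(x)^n equals x ↦ (w-i)^n (-1)^n n! · u_w(x)^{-(n+1)} on ℝ. -/

import Mathlib

open Complex

private lemma uw_ne (w : ℂ) (hw : w.im ≠ 0) (x : ℝ) : (x : ℂ) - w ≠ 0 := by
  intro h
  apply hw
  have := congrArg Complex.im h
  simpa using this

private lemma base_contDiff (w : ℂ) : ContDiff ℝ ⊤ (fun x : ℝ => (x : ℂ) - w) :=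
  Complex.ofRealCLM.contDiff.sub contDiff_const

private lemma invpow_contDiff (w : ℂ) (hw : w.im ≠ 0) (k : ℕ) :
    ContDiff ℝ ⊤ (fun x : ℝ => (((x : ℂ) - w) ^ k)⁻¹) :=
  ((base_contDiff w).pow k).inv fun x => pow_ne_zero k (uw_ne w hw x)

private lemma deriv_invpow (w : ℂ) (hw : w.im ≠ 0) (k : ℕ) :
    deriv (fun x : ℝ => (((x : ℂ) - w) ^ (k + 1))⁻¹)
      = fun x : ℝ => -(k + 1 : ℂ) * (((x : ℂ) - w) ^ (k + 2))⁻¹ := by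
  funext x
  have h1 : HasDerivAt (fun z : ℂ => z - w) 1 (x : ℂ) := (hasDerivAt_id _).sub_const w
  have h2 : HasDerivAt (fun z : ℂ => (z - w) ^ (k + 1))
      ((k + 1 : ℕ) * ((x : ℂ) - w) ^ ((k + 1) - 1) * 1) (x : ℂ) := h1.pow (k + 1)
  have h3 := (h2.inv (pow_ne_zero (k + 1) (uw_ne w hw x))).comp_ofReal
  rw [HasDerivAt.deriv (f := fun x : ℝ => (((x : ℂ) - w) ^ (k + 1))⁻¹) h3]
  simp only [Nat.add_sub_cancel, Nat.cast_add, Nat.cast_one]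
  have hx := uw_ne w hw x
  field_simp
  ring

private lemma iteratedDeriv_zero_fun (n : ℕ) :
    iteratedDeriv n (fun _ : ℝ => (0 : ℂ)) = 0 := by
  induction n with
  | zero => funext x; simp
  | succ n ih =>
    rw [iteratedDeriv_succ', deriv_const']
    exact ih

private lemma my_iteratedDeriv_add (n : ℕ) {f g : ℝ → ℂ} (hf : ContDiff ℝ n f)
    (hg : ContDiff ℝ n g) :
    iteratedDeriv n (fun x => f x + g x) = fun x => iteratedDeriv n f x + iteratedDeriv n g x := by
  funext x
  simp only [← iteratedDerivWithin_univ]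
  have := iteratedDerivWithin_add (Set.mem_univ x) uniqueDiffOn_univ hf.contDiffWithinAt hg.contDiffWithinAt
  simpa [Pi.add_def] using this

private lemma my_iteratedDeriv_const_mul (n : ℕ) {f : ℝ → ℂ} (hf : ContDiff ℝ n f) (c : ℂ) :
    iteratedDeriv n (fun x => c * f x) = fun x => c * iteratedDeriv n f x := by
  funext x
  simp only [← iteratedDerivWithin_univ]
  have := iteratedDerivWithin_const_smul (Set.mem_univ x) uniqueDiffOn_univ c hf.contDiffWithinAt
  simpa [Pi.smul_def, smul_eq_mul] using this

private lemma deriv_u_pow (d : ℕ) :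
    deriv (fun x : ℝ => ((x : ℂ) - I) ^ (d + 1))
      = fun x : ℝ => (d + 1 : ℂ) * ((x : ℂ) - I) ^ d := by
  funext x
  have h1 : HasDerivAt (fun z : ℂ => z - I) 1 (x : ℂ) := (hasDerivAt_id _).sub_const I
  have h2 : HasDerivAt (fun z : ℂ => (z - I) ^ (d + 1))
      ((d + 1 : ℕ) * ((x : ℂ) - I) ^ ((d + 1) - 1) * 1) (x : ℂ) := h1.pow (d + 1)
  have h3 := h2.comp_ofReal
  rw [h3.deriv]
  push_cast
  ring

private lemma u_pow_contDiff (d : ℕ) (m : ℕ∞) : ContDiff ℝ m (fun x : ℝ => ((x : ℂ) - I) ^ d) :=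
  ((Complex.ofRealCLM.contDiff.sub contDiff_const).pow d).of_le le_top

private lemma iteratedDeriv_u_pow_eq_zero : ∀ n d : ℕ, d < n →
    iteratedDeriv n (fun x : ℝ => ((x : ℂ) - I) ^ d) = 0 := by
  intro n
  induction n with
  | zero => intro d hd; omega
  | succ n ih =>
    intro d hd
    rw [iteratedDeriv_succ']
    cases d with
    | zero =>
      simp only [pow_zero]
      rw [deriv_const']
      exact iteratedDeriv_zero_fun n
    | succ d =>
      rw [deriv_u_pow d]
      rw [my_iteratedDeriv_const_mul n ((u_pow_contDiff d _)) ((d : ℂ) + 1)]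
      rw [ih d (by omega)]
      funext x
      simp

/-- For `w ∈ ℂ` with `Im w ≠ 0`, `u_w(x) = x - w` and `u(x) = x - i`,
the `n`-th derivative of `x ↦ u_w(x)⁻¹ u(x)^n` equals
`x ↦ (w - i)^n (-1)^n n! · u_w(x)^{-(n+1)}` on `ℝ`. -/
theorem iteratedDeriv_inv_uw_mul_u_pow (w : ℂ) (hw : w.im ≠ 0) (n : ℕ) :
    iteratedDeriv n (fun x : ℝ => ((x : ℂ) - w)⁻¹ * ((x : ℂ) - I) ^ n)
      = fun x : ℝ =>
          (w - I) ^ n * (-1 : ℂ) ^ n * (n.factorial : ℂ) * (((x : ℂ) - w) ^ (n + 1))⁻¹ := by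
  induction n with
  | zero =>
    funext x
    simp
  | succ n ih =>
    have hsmooth : ContDiff ℝ ((n : ℕ∞) + 1)
        (fun x : ℝ => ((x : ℂ) - w)⁻¹ * ((x : ℂ) - I) ^ n) :=
      ((((base_contDiff w).inv (uw_ne w hw)).of_le le_top).mul (u_pow_contDiff n _))
    have key : (fun x : ℝ => ((x : ℂ) - w)⁻¹ * ((x : ℂ) - I) ^ (n + 1))
        = fun x : ℝ => ((x : ℂ) - I) ^ n
            + (w - I) * (((x : ℂ) - w)⁻¹ * ((x : ℂ) - I) ^ n) := by
      funext x
      have hx := uw_ne w hw x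
      field_simp
      ring
    rw [key, my_iteratedDeriv_add (n + 1) (u_pow_contDiff n _)
      (contDiff_const.mul hsmooth),
      my_iteratedDeriv_const_mul (n + 1) hsmooth (w - I)]
    have hz := iteratedDeriv_u_pow_eq_zero (n + 1) n (by omega)
    rw [hz, iteratedDeriv_succ, ih]
    have hd : deriv (fun x : ℝ =>
        (w - I) ^ n * (-1 : ℂ) ^ n * (n.factorial : ℂ) * (((x : ℂ) - w) ^ (n + 1))⁻¹)
        = fun x : ℝ => (w - I) ^ n * (-1 : ℂ) ^ n * (n.factorial : ℂ)
            * (-(n + 1 : ℂ) * (((x : ℂ) - w) ^ (n + 2))⁻¹) := by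
      funext x
      rw [deriv_const_mul]
      · rw [deriv_invpow w hw n]
      · have h1 : HasDerivAt (fun z : ℂ => z - w) 1 (x : ℂ) := (hasDerivAt_id _).sub_const w
        have h2 : HasDerivAt (fun z : ℂ => (z - w) ^ (n + 1))
            ((n + 1 : ℕ) * ((x : ℂ) - w) ^ ((n + 1) - 1) * 1) (x : ℂ) := h1.pow (n + 1)
        exact ((h2.inv (pow_ne_zero (n + 1) (uw_ne w hw x))).comp_ofReal).differentiableAt
    rw [hd]
    funext x
    simp only [Pi.zero_apply, zero_add]
    push_cast [Nat.factorial_succ]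
    ring
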